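/- Let (P, Ω) be a poset with an ℝ-flow, let ε ≥ 0, and let I, J ⊆ P be intervals such that all pairwise intersections among shifts of I and J occurring below are intervals (e.g. I, J belong to an intersection-closed family of intervals closed under the action of Ω). Then the ordered pair (C(I), C(J)) is left ε-interleaved if and only if either I is 2ε-trivial, or the following three conditions hold: (1) there exists a nonzero morphism C(I) → C(J(ε)); (2) there exists a nonzero morphism C(J) → C(I(ε)); (3) I ∩ I(2ε) is nonempty and I ∩ I(2ε) ⊆ J(ε). -/

import Mathlib

open CategoryTheory
open scoped Classical ENNReal NNReal

set_option linter.unusedSectionVars false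
set_option linter.unusedVariables false

/-! ## Posets, intervals, flows -/

variable {P : Type} [PartialOrder P]

/-- A subset of a poset is poset-convex if it contains every point between two of its points. -/
def PosetConvex (I : Set P) : Prop :=
  ∀ ⦃p q r : P⦄, p ∈ I → q ∈ I → p ≤ r → r ≤ q → r ∈ I

/-- A subset of a poset is poset-connected if any two of its points are joined by a
zigzag path inside the subset. -/
def PosetConnected (I : Set P) : Prop :=
  ∀ p ∈ I, ∀ q ∈ I,
    Relation.ReflTransGen (fun a b => b ∈ I ∧ (a ≤ b ∨ b ≤ a)) p q

/-- An interval in a poset is a poset-convex and poset-connected subset. -/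
def IsInterval (I : Set P) : Prop := PosetConvex I ∧ PosetConnected I

/-- `Q` is a poset-connected component of `U`: a poset-connected subset of `U`, maximal with
respect to inclusion among poset-connected subsets of `U`. -/
def IsPosetComponent (U Q : Set P) : Prop :=
  Q ⊆ U ∧ PosetConnected Q ∧
    ∀ Q' : Set P, Q' ⊆ U → PosetConnected Q' → Q ⊆ Q' → Q' = Q

/-- A subset `Q` of `I ∩ J` is `(I,J)`-valid. -/
def IsValid (I J Q : Set P) : Prop :=
  ∀ p ∈ Q, (∀ q ∈ I, q ≤ p → q ∈ J) ∧ (∀ r ∈ J, p ≤ r → r ∈ I)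

/-- An `ℝ`-flow on a poset. -/
structure RFlow (P : Type) [PartialOrder P] where
  Ω : ℝ → P → P
  mono : ∀ t : ℝ, Monotone (Ω t)
  mono_param : ∀ {t s : ℝ}, t ≤ s → ∀ p : P, Ω t p ≤ Ω s p
  add : ∀ t s : ℝ, ∀ p : P, Ω (t + s) p = Ω t (Ω s p)
  zero : ∀ p : P, Ω 0 p = p

/-- The `t`-shift `I(t)` of a subset of a poset with an `ℝ`-flow. -/
def RFlow.shiftSet (Φ : RFlow P) (I : Set P) (t : ℝ) : Set P := {p : P | Φ.Ω t p ∈ I}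

lemma RFlow.self_le (Φ : RFlow P) {t : ℝ} (ht : 0 ≤ t) (p : P) : p ≤ Φ.Ω t p := by
  have h := Φ.mono_param ht p
  rwa [Φ.zero] at h

lemma RFlow.self_le_twice (Φ : RFlow P) {t : ℝ} (ht : 0 ≤ t) (p : P) :
    p ≤ Φ.Ω t (Φ.Ω t p) :=
  (Φ.self_le ht p).trans (Φ.self_le ht _)

lemma RFlow.omega_neg_omega (Φ : RFlow P) (t : ℝ) (p : P) : Φ.Ω (-t) (Φ.Ω t p) = p := by
  have h := Φ.add (-t) t p
  rw [neg_add_cancel, Φ.zero] at h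
  exact h.symm

lemma RFlow.omega_omega_neg (Φ : RFlow P) (t : ℝ) (p : P) : Φ.Ω t (Φ.Ω (-t) p) = p := by
  have h := Φ.add t (-t) p
  rw [add_neg_cancel, Φ.zero] at h
  exact h.symm

lemma RFlow.posetConvex_shiftSet (Φ : RFlow P) {I : Set P} (hI : PosetConvex I) (t : ℝ) :
    PosetConvex (Φ.shiftSet I t) := by
  intro p q r hp hq hpr hrq
  exact hI hp hq (Φ.mono t hpr) (Φ.mono t hrq)

lemma RFlow.posetConnected_shiftSet (Φ : RFlow P) {I : Set P} (hI : PosetConnected I) (t : ℝ) :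
    PosetConnected (Φ.shiftSet I t) := by
  intro p hp q hq
  have h := hI _ hp _ hq
  have h2 := Relation.ReflTransGen.lift
    (r := fun a b : P => b ∈ I ∧ (a ≤ b ∨ b ≤ a))
    (p := fun a b : P => b ∈ Φ.shiftSet I t ∧ (a ≤ b ∨ b ≤ a)) (fun x : P => Φ.Ω (-t) x)
    (fun a b hab => ⟨show Φ.Ω t (Φ.Ω (-t) b) ∈ I by rw [Φ.omega_omega_neg]; exact hab.1,
      hab.2.imp (fun h' => Φ.mono (-t) h') (fun h' => Φ.mono (-t) h')⟩) _ _ h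
  simpa only [Function.onFun, Φ.omega_neg_omega] using h2

lemma RFlow.isInterval_shiftSet (Φ : RFlow P) {I : Set P} (hI : IsInterval I) (t : ℝ) :
    IsInterval (Φ.shiftSet I t) :=
  ⟨Φ.posetConvex_shiftSet hI.1 t, Φ.posetConnected_shiftSet hI.2 t⟩

lemma RFlow.shiftSet_nonempty (Φ : RFlow P) {I : Set P} (hI : I.Nonempty) (t : ℝ) :
    (Φ.shiftSet I t).Nonempty := by
  obtain ⟨x, hx⟩ := hI
  exact ⟨Φ.Ω (-t) x, show Φ.Ω t (Φ.Ω (-t) x) ∈ I by rw [Φ.omega_omega_neg]; exact hx⟩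

/-! ## Characteristic (interval) persistence modules -/

variable (K : Type) [Field K]

/-- The pointwise value of the characteristic module of `I`, as a submodule of `K`. -/
noncomputable def charSub (I : Set P) (p : P) : Submodule K K :=
  if p ∈ I then ⊤ else ⊥

lemma charSub_eq_top {I : Set P} {p : P} (hp : p ∈ I) : charSub K I p = ⊤ := if_pos hp

lemma charSub_eq_bot {I : Set P} {p : P} (hp : p ∉ I) : charSub K I p = ⊥ := if_neg hp

lemma charElt_eq_zero {I : Set P} {p : P} (hp : p ∉ I) (x : ↥(charSub K I p)) : x = 0 := by
  exact Subtype.ext ((Submodule.eq_bot_iff _).mp (charSub_eq_bot K hp) (x : K) x.2)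

/-- The structure maps of the characteristic module of `I`. -/
noncomputable def charMap (I : Set P) (p q : P) :
    ↥(charSub K I p) →ₗ[K] ↥(charSub K I q) :=
  if h : p ∈ I ∧ q ∈ I then
    { toFun := fun x => ⟨(x : K), by rw [charSub_eq_top K h.2]; exact Submodule.mem_top⟩
      map_add' := fun x y => rfl
      map_smul' := fun c x => rfl }
  else 0

lemma charMap_id (I : Set P) (p : P) : charMap K I p p = LinearMap.id := by
  by_cases hp : p ∈ I
  · simp only [charMap, dif_pos (And.intro hp hp)]
    rfl
  · ext x
    rw [charElt_eq_zero K hp x]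
    simp

lemma charMap_comp {I : Set P} (hI : PosetConvex I) {p q r : P} (hpq : p ≤ q) (hqr : q ≤ r) :
    (charMap K I q r).comp (charMap K I p q) = charMap K I p r := by
  by_cases hp : p ∈ I
  · by_cases hr : r ∈ I
    · have hq : q ∈ I := hI hp hr hpq hqr
      ext x
      simp only [charMap, dif_pos (And.intro hp hq), dif_pos (And.intro hq hr),
        dif_pos (And.intro hp hr), LinearMap.comp_apply, LinearMap.coe_mk, AddHom.coe_mk]
    · ext x
      exact congrArg Subtype.val
        ((charElt_eq_zero K hr ((charMap K I q r).comp (charMap K I p q) x)).trans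
          (charElt_eq_zero K hr (charMap K I p r x)).symm)
  · ext x
    rw [charElt_eq_zero K hp x]
    simp

/-- The characteristic persistence module `C(I)` of a poset-convex subset `I`. -/
noncomputable def charMod (I : Set P) (hI : PosetConvex I) : P ⥤ ModuleCat K where
  obj p := ModuleCat.of K ↥(charSub K I p)
  map {p q} h := ModuleCat.ofHom (charMap K I p q)
  map_id p := by rw [charMap_id K I p]; rfl
  map_comp {p q r} h1 h2 := by rw [← charMap_comp K hI (leOfHom h1) (leOfHom h2)]; rfl

/-- The zero persistence module, realized as the characteristic module of the empty interval. -/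
noncomputable def zeroPMod : P ⥤ ModuleCat K :=
  charMod K (∅ : Set P) (fun _ _ _ hp _ _ _ => absurd hp (Set.notMem_empty _))

/-! ## Barcodes and interval-decomposable modules -/

/-- A barcode over a poset: a multiset of nonempty intervals, encoded as an indexed family. -/
structure Barcode (P : Type) [PartialOrder P] where
  ι : Type
  B : ι → Set P
  interval : ∀ a : ι, IsInterval (B a)
  nonempty : ∀ a : ι, (B a).Nonempty

/-- The interval-decomposable module `⊕_{a} C(B a)` associated to a barcode. -/
noncomputable def bcMod (D : Barcode P) : P ⥤ ModuleCat K where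
  obj p := ModuleCat.of K (Π₀ a : D.ι, ↥(charSub K (D.B a) p))
  map {p q} h := ModuleCat.ofHom (DFinsupp.mapRange.linearMap (fun a => charMap K (D.B a) p q))
  map_id p := by
    have h : (fun a : D.ι => charMap K (D.B a) p p)
        = fun a : D.ι => (LinearMap.id : ↥(charSub K (D.B a) p) →ₗ[K] ↥(charSub K (D.B a) p)) := by
      funext a; exact charMap_id K (D.B a) p
    show ModuleCat.ofHom (DFinsupp.mapRange.linearMap (fun a => charMap K (D.B a) p p)) = 𝟙 _
    rw [h, DFinsupp.mapRange.linearMap_id]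
    rfl
  map_comp {p q r} h1 h2 := by
    have h : (fun a : D.ι => charMap K (D.B a) p r)
        = fun a : D.ι => (charMap K (D.B a) q r).comp (charMap K (D.B a) p q) := by
      funext a
      exact (charMap_comp K (D.interval a).1 (leOfHom h1) (leOfHom h2)).symm
    show ModuleCat.ofHom (DFinsupp.mapRange.linearMap (fun a => charMap K (D.B a) p r)) = _
    rw [h, DFinsupp.mapRange.linearMap_comp]
    rfl

/-- `M` is interval-decomposable with barcode `D`. -/
def IsDecompositionOf (D : Barcode P) (M : P ⥤ ModuleCat K) : Prop :=
  Nonempty (M ≅ bcMod K D)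

/-- The shift of a barcode along a flow. -/
noncomputable def Barcode.shift (D : Barcode P) (Φ : RFlow P) (t : ℝ) : Barcode P where
  ι := D.ι
  B a := Φ.shiftSet (D.B a) t
  interval a := Φ.isInterval_shiftSet (D.interval a) t
  nonempty a := Φ.shiftSet_nonempty (D.nonempty a) t

/-! ## Shifts of modules, interleavings, distances -/

/-- The shift `M(t)` of a persistence module along a flow. -/
noncomputable def Pshift (Φ : RFlow P) (t : ℝ) (M : P ⥤ ModuleCat K) : P ⥤ ModuleCat K :=
  (Φ.mono t).functor ⋙ M

/-- The ordered pair `(M, N)` is left `ε`-interleaved. -/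
noncomputable def LeftInterleaved (Φ : RFlow P) {ε : ℝ} (hε : 0 ≤ ε)
    (M N : P ⥤ ModuleCat K) : Prop :=
  ∃ (f : M ⟶ Pshift K Φ ε N) (g : N ⟶ Pshift K Φ ε M),
    ∀ p : P, f.app p ≫ g.app (Φ.Ω ε p) = M.map (homOfLE (Φ.self_le_twice hε p))

/-- `M` and `N` are `ε`-interleaved. -/
noncomputable def Interleaved (Φ : RFlow P) {ε : ℝ} (hε : 0 ≤ ε)
    (M N : P ⥤ ModuleCat K) : Prop :=
  ∃ (f : M ⟶ Pshift K Φ ε N) (g : N ⟶ Pshift K Φ ε M),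
    (∀ p : P, f.app p ≫ g.app (Φ.Ω ε p) = M.map (homOfLE (Φ.self_le_twice hε p))) ∧
    (∀ p : P, g.app p ≫ f.app (Φ.Ω ε p) = N.map (homOfLE (Φ.self_le_twice hε p)))

/-- The interleaving distance between two persistence modules. -/
noncomputable def dI (Φ : RFlow P) (M N : P ⥤ ModuleCat K) : ℝ≥0∞ :=
  ⨅ (ε : NNReal) (_ : Interleaved K Φ ε.coe_nonneg M N), (ε : ℝ≥0∞)

/-- An interval `I` is `t`-trivial if the transition morphism `C(I) → C(I(t))` vanishes. -/
noncomputable def IsTrivialIv (Φ : RFlow P) {t : ℝ} (ht : 0 ≤ t)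
    (I : Set P) (hI : PosetConvex I) : Prop :=
  ∀ p : P, (charMod K I hI).map (homOfLE (Φ.self_le ht p)) = 0

/-- An `ε`-correspondence between two barcodes. -/
noncomputable def IsCorrespondence (Φ : RFlow P) {ε : ℝ} (hε : 0 ≤ ε)
    (DM DN : Barcode P) (σ : Set (DM.ι × DN.ι)) : Prop :=
  (∀ ab ∈ σ, Interleaved K Φ hε
      (charMod K (DM.B ab.1) (DM.interval ab.1).1) (charMod K (DN.B ab.2) (DN.interval ab.2).1)) ∧
  (∀ a : DM.ι, (∀ b : DN.ι, (a, b) ∉ σ) →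
      Interleaved K Φ hε (charMod K (DM.B a) (DM.interval a).1) (zeroPMod K)) ∧
  (∀ b : DN.ι, (∀ a : DM.ι, (a, b) ∉ σ) →
      Interleaved K Φ hε (zeroPMod K) (charMod K (DN.B b) (DN.interval b).1))

/-- An `ε`-matching between two barcodes. -/
noncomputable def IsMatching (Φ : RFlow P) {ε : ℝ} (hε : 0 ≤ ε)
    (DM DN : Barcode P) (σ : Set (DM.ι × DN.ι)) : Prop :=
  IsCorrespondence K Φ hε DM DN σ ∧
  (∀ a b b', (a, b) ∈ σ → (a, b') ∈ σ → b = b') ∧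
  (∀ a a' b, (a, b) ∈ σ → (a', b) ∈ σ → a = a')

/-- The Hausdorff distance between (modules with) barcodes `DM`, `DN`. -/
noncomputable def dH (Φ : RFlow P) (DM DN : Barcode P) : ℝ≥0∞ :=
  ⨅ (ε : NNReal) (_ : ∃ σ : Set (DM.ι × DN.ι), IsCorrespondence K Φ ε.coe_nonneg DM DN σ),
    (ε : ℝ≥0∞)

/-- The bottleneck distance between (modules with) barcodes `DM`, `DN`. -/
noncomputable def dB (Φ : RFlow P) (DM DN : Barcode P) : ℝ≥0∞ :=
  ⨅ (ε : NNReal) (_ : ∃ σ : Set (DM.ι × DN.ι), IsMatching K Φ ε.coe_nonneg DM DN σ),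
    (ε : ℝ≥0∞)


/-! ## Auxiliary machinery -/

section Aux

variable (K : Type) [Field K]

noncomputable def oneElt {A : Set P} {p : P} (hp : p ∈ A) : ↥(charSub K A p) :=
  ⟨1, by rw [charSub_eq_top K hp]; exact Submodule.mem_top⟩

lemma elt_eq_smul_one {A : Set P} {p : P} (hp : p ∈ A) (x : ↥(charSub K A p)) :
    x = (x : K) • oneElt K hp := by
  apply Subtype.ext
  show (x : K) = (x : K) • (1 : K)
  simp

/-- The canonical "identity-valued" map between pointwise characteristic submodules. -/
noncomputable def xMap (A B : Set P) (p q : P) :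
    ↥(charSub K A p) →ₗ[K] ↥(charSub K B q) :=
  if h : p ∈ A ∧ q ∈ B then
    { toFun := fun x => ⟨(x : K), by rw [charSub_eq_top K h.2]; exact Submodule.mem_top⟩
      map_add' := fun x y => rfl
      map_smul' := fun c x => rfl }
  else 0

lemma xMap_val {A B : Set P} {p q : P} (h : p ∈ A ∧ q ∈ B) (x : ↥(charSub K A p)) :
    ((xMap K A B p q x : ↥(charSub K B q)) : K) = (x : K) := by
  simp only [xMap, dif_pos h]
  rfl

lemma xMap_zero {A B : Set P} {p q : P} (h : ¬(p ∈ A ∧ q ∈ B)) :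
    xMap K A B p q = 0 := dif_neg h

lemma charMap_val {I : Set P} {p q : P} (h : p ∈ I ∧ q ∈ I) (x : ↥(charSub K I p)) :
    ((charMap K I p q x : ↥(charSub K I q)) : K) = (x : K) := by
  simp only [charMap, dif_pos h]
  rfl

lemma charMap_zero {I : Set P} {p q : P} (h : ¬(p ∈ I ∧ q ∈ I)) :
    charMap K I p q = 0 := dif_neg h

lemma lmap_ext {A B : Set P} {p q : P} {F G : ↥(charSub K A p) →ₗ[K] ↥(charSub K B q)}
    (h : ∀ x, ((F x : ↥(charSub K B q)) : K) = ((G x : ↥(charSub K B q)) : K)) : F = G :=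
  LinearMap.ext fun x => Subtype.ext (h x)

lemma map_zero_of_src {A B : Set P} {p q : P} (hp : p ∉ A)
    (F : ↥(charSub K A p) →ₗ[K] ↥(charSub K B q)) : F = 0 := by
  refine LinearMap.ext fun x => ?_
  rw [charElt_eq_zero K hp x]
  simp

lemma map_zero_of_tgt {A B : Set P} {p q : P} (hq : q ∉ B)
    (F : ↥(charSub K A p) →ₗ[K] ↥(charSub K B q)) : F = 0 := by
  refine LinearMap.ext fun x => ?_
  rw [charElt_eq_zero K hq (F x), charElt_eq_zero K hq ((0 : _ →ₗ[K] _) x)]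

lemma map_eq_zero_of_val {A B : Set P} {p q : P} (hp : p ∈ A)
    (F : ↥(charSub K A p) →ₗ[K] ↥(charSub K B q))
    (h : ((F (oneElt K hp) : ↥(charSub K B q)) : K) = 0) : F = 0 := by
  refine lmap_ext K fun x => ?_
  rw [elt_eq_smul_one K hp x, map_smul]
  show (x : K) * ((F (oneElt K hp) : ↥(charSub K B q)) : K) = _
  rw [h, mul_zero]
  simp

/-- A morphism between characteristic modules, viewed pointwise as a plain linear map. -/
noncomputable def appMap {A B : Set P} {hA : PosetConvex A} {hB : PosetConvex B}
    (f : charMod K A hA ⟶ charMod K B hB) (p : P) :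
    ↥(charSub K A p) →ₗ[K] ↥(charSub K B p) := (f.app p).hom

lemma appMap_ne_zero {A B : Set P} {hA : PosetConvex A} {hB : PosetConvex B}
    (f : charMod K A hA ⟶ charMod K B hB) (p : P) (h : f.app p ≠ 0) :
    appMap K f p ≠ 0 := fun h0 => h (ModuleCat.hom_ext (by rw [ModuleCat.hom_zero]; exact h0))

/-- Naturality of morphisms between characteristic modules, in pointwise form. -/
lemma charHom_nat {A B : Set P} {hA : PosetConvex A} {hB : PosetConvex B}
    (f : charMod K A hA ⟶ charMod K B hB) {p q : P} (hpq : p ≤ q) (x : ↥(charSub K A p)) :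
    appMap K f q (charMap K A p q x) = charMap K B p q (appMap K f p x) :=
  congrArg (fun F => ModuleCat.Hom.hom F x) (f.naturality (homOfLE hpq))

/-- A nonzero morphism between characteristic modules of convex sets whose intersection is
poset-connected forces the intersection to be nonempty and valid. -/
lemma valid_of_hom_ne_zero {A B : Set P} (hA : PosetConvex A) (hB : PosetConvex B)
    (hconn : PosetConnected (A ∩ B))
    (f : charMod K A hA ⟶ charMod K B hB) (hf : f ≠ 0) :
    (A ∩ B).Nonempty ∧ IsValid A B (A ∩ B) := by
  have hex : ∃ p, appMap K f p ≠ 0 := by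
    by_contra h
    push_neg at h
    exact hf (NatTrans.ext (funext fun p => ModuleCat.hom_ext (by rw [NatTrans.app_zero, ModuleCat.hom_zero]; exact h p)))
  obtain ⟨p₀, hp₀⟩ := hex
  have hp₀A : p₀ ∈ A := by
    by_contra h
    exact hp₀ (map_zero_of_src K h _)
  have hp₀B : p₀ ∈ B := by
    by_contra h
    exact hp₀ (map_zero_of_tgt K h _)
  have hc₀ : ((appMap K f p₀ (oneElt K hp₀A) : ↥(charSub K B p₀)) : K) ≠ 0 := by
    intro h
    exact hp₀ (map_eq_zero_of_val K hp₀A _ h)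
  -- scalar transport along comparabilities
  have step : ∀ (a b : P) (haA : a ∈ A) (haB : a ∈ B) (hbA : b ∈ A) (hbB : b ∈ B), a ≤ b →
      ((appMap K f b (oneElt K hbA) : ↥(charSub K B b)) : K)
        = ((appMap K f a (oneElt K haA) : ↥(charSub K B a)) : K) := by
    intro a b haA haB hbA hbB hab
    have h1 : charMap K A a b (oneElt K haA) = oneElt K hbA :=
      Subtype.ext (charMap_val K ⟨haA, hbA⟩ _)
    have h2 := charHom_nat K f hab (oneElt K haA)
    rw [h1] at h2
    have h3 := congrArg Subtype.val h2
    rwa [charMap_val K ⟨haB, hbB⟩] at h3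
  -- propagate nonvanishing along zigzags
  have key : ∀ q : P, Relation.ReflTransGen (fun a b => b ∈ A ∩ B ∧ (a ≤ b ∨ b ≤ a)) p₀ q →
      ∃ (hqA : q ∈ A) (hqB : q ∈ B),
        ((appMap K f q (oneElt K hqA) : ↥(charSub K B q)) : K) ≠ 0 := by
    intro q h
    induction h with
    | refl => exact ⟨hp₀A, hp₀B, hc₀⟩
    | @tail b c hpb hbc ih =>
        obtain ⟨hbA, hbB, hbne⟩ := ih
        obtain ⟨⟨hcA, hcB⟩, hcomp⟩ := hbc
        refine ⟨hcA, hcB, ?_⟩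
        rcases hcomp with h1 | h1
        · rw [step b c hbA hbB hcA hcB h1]; exact hbne
        · rw [step c b hcA hcB hbA hbB h1] at hbne; exact hbne
  refine ⟨⟨p₀, hp₀A, hp₀B⟩, ?_⟩
  rintro q ⟨hqA, hqB⟩
  obtain ⟨hqA', hqB', hqne⟩ := key q (hconn p₀ ⟨hp₀A, hp₀B⟩ q ⟨hqA, hqB⟩)
  constructor
  · intro a haA haq
    by_contra haB
    have hfa : appMap K f a = 0 := map_zero_of_tgt K haB _
    have h2 := charHom_nat K f haq (oneElt K haA)
    rw [hfa] at h2
    simp only [LinearMap.zero_apply, map_zero] at h2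
    have h1 : charMap K A a q (oneElt K haA) = oneElt K hqA' :=
      Subtype.ext (charMap_val K ⟨haA, hqA'⟩ _)
    rw [h1] at h2
    apply hqne
    rw [h2]
    rfl
  · intro r hrB hqr
    by_contra hrA
    have hzero : charMap K A q r = 0 := charMap_zero K (fun h => hrA h.2)
    have h2 := charHom_nat K f hqr (oneElt K hqA')
    rw [hzero] at h2
    simp only [LinearMap.zero_apply, map_zero] at h2
    apply hqne
    have h3 : ((charMap K B q r (appMap K f q (oneElt K hqA')) : ↥(charSub K B r)) : K) = 0 := by
      rw [← h2]; rfl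
    rwa [charMap_val K ⟨hqB', hrB⟩] at h3

/-- The indicator natural transformation between characteristic modules, when the
intersection is valid. -/
noncomputable def indTrans {A B : Set P} (hA : PosetConvex A) (hB : PosetConvex B)
    (hv : IsValid A B (A ∩ B)) : charMod K A hA ⟶ charMod K B hB where
  app p := ModuleCat.ofHom (xMap K A B p p)
  naturality := by
    intro p q h
    have hpq : p ≤ q := leOfHom h
    apply ModuleCat.hom_ext
    show (xMap K A B q q).comp (charMap K A p q) = (charMap K B p q).comp (xMap K A B p p)
    refine lmap_ext K fun x => ?_
    simp only [LinearMap.comp_apply]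
    by_cases hp : p ∈ A
    · by_cases hq : q ∈ A ∧ q ∈ B
      · have hpB : p ∈ B := (hv q ⟨hq.1, hq.2⟩).1 p hp hpq
        rw [xMap_val K ⟨hq.1, hq.2⟩, charMap_val K ⟨hp, hq.1⟩, charMap_val K ⟨hpB, hq.2⟩,
          xMap_val K ⟨hp, hpB⟩]
      · rw [xMap_zero K hq]
        by_cases hpB : p ∈ B
        · have hqB : q ∉ B := fun hqB => hq ⟨(hv p ⟨hp, hpB⟩).2 q hqB hpq, hqB⟩
          rw [charMap_zero K (fun h' => hqB h'.2)]
          simp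
        · rw [xMap_zero K (fun h' => hpB h'.2)]
          simp
    · rw [charElt_eq_zero K hp x]
      simp

lemma isTrivialIv_iff {I : Set P} (hI : PosetConvex I) (Φ : RFlow P) {t : ℝ} (ht : 0 ≤ t) :
    IsTrivialIv K Φ ht I hI ↔ ∀ p : P, ¬(p ∈ I ∧ Φ.Ω t p ∈ I) := by
  constructor
  · intro h p hp
    have h2 : charMap K I p (Φ.Ω t p) = 0 := by
      have := congrArg ModuleCat.Hom.hom (h p); rw [ModuleCat.hom_zero] at this; exact this
    have hv := charMap_val K hp (oneElt K hp.1)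
    rw [h2] at hv
    simp only [LinearMap.zero_apply] at hv
    have h01 : (0 : K) = 1 := hv
    exact one_ne_zero h01.symm
  · intro h p
    apply ModuleCat.hom_ext; rw [ModuleCat.hom_zero]
    show charMap K I p (Φ.Ω t p) = 0
    exact charMap_zero K (h p)

lemma shiftSet_eq_image (Φ : RFlow P) (S : Set P) (t : ℝ) :
    Φ.shiftSet S t = Φ.Ω (-t) '' S := by
  ext p
  constructor
  · intro hp
    exact ⟨Φ.Ω t p, hp, Φ.omega_neg_omega t p⟩
  · rintro ⟨s, hs, rfl⟩
    show Φ.Ω t (Φ.Ω (-t) s) ∈ S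
    rw [Φ.omega_omega_neg]
    exact hs

end Aux
/-- geometric characterization of left `ε`-interleavings between interval
modules whose intervals lie in an intersection-closed, flow-closed family of intervals. -/
theorem left_interleaving_characterization (Φ : RFlow P)
    (F : Set (Set P)) (hFiv : ∀ S ∈ F, IsInterval S)
    (hFcap : ∀ S ∈ F, ∀ T ∈ F, S ∩ T ∈ F)
    (hFflow : ∀ S ∈ F, ∀ t : ℝ, Φ.Ω t '' S ∈ F)
    {ε : ℝ} (hε : 0 ≤ ε) (I J : Set P) (hIF : I ∈ F) (hJF : J ∈ F) :
    LeftInterleaved K Φ hε (charMod K I (hFiv I hIF).1) (charMod K J (hFiv J hJF).1) ↔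
      (IsTrivialIv K Φ (show (0:ℝ) ≤ 2 * ε by linarith) I (hFiv I hIF).1 ∨
       ((∃ f : charMod K I (hFiv I hIF).1 ⟶
            charMod K (Φ.shiftSet J ε) (Φ.posetConvex_shiftSet (hFiv J hJF).1 ε), f ≠ 0) ∧
        (∃ g : charMod K J (hFiv J hJF).1 ⟶
            charMod K (Φ.shiftSet I ε) (Φ.posetConvex_shiftSet (hFiv I hIF).1 ε), g ≠ 0) ∧
        ((I ∩ Φ.shiftSet I (2 * ε)).Nonempty ∧
          I ∩ Φ.shiftSet I (2 * ε) ⊆ Φ.shiftSet J ε))) := by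
  have e2 : ∀ p : P, Φ.Ω (2 * ε) p = Φ.Ω ε (Φ.Ω ε p) := fun p => by
    rw [two_mul]; exact Φ.add ε ε p
  constructor
  · rintro ⟨f, g, hfg⟩
    by_cases htriv : IsTrivialIv K Φ (show (0:ℝ) ≤ 2 * ε by linarith) I (hFiv I hIF).1
    · exact Or.inl htriv
    right
    rw [isTrivialIv_iff] at htriv
    push_neg at htriv
    -- key pointwise claim
    have claim : ∀ p : P, p ∈ I → Φ.Ω (2 * ε) p ∈ I →
        (f.app p ≠ 0 ∧ g.app (Φ.Ω ε p) ≠ 0 ∧ Φ.Ω ε p ∈ J) := by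
      intro p hpI hpI2
      have hI2 : Φ.Ω ε (Φ.Ω ε p) ∈ I := by rw [← e2 p]; exact hpI2
      have h := hfg p
      have h2 : g.app (Φ.Ω ε p) (f.app p (oneElt K hpI))
          = charMap K I p (Φ.Ω ε (Φ.Ω ε p)) (oneElt K hpI) :=
        congrArg (fun F => ModuleCat.Hom.hom F (oneElt K hpI)) h
      have main : g.app (Φ.Ω ε p) (f.app p (oneElt K hpI)) ≠ 0 := by
        intro hz
        have h2' := h2.symm.trans hz
        have h01 : (1 : K) = 0 :=
          (charMap_val K ⟨hpI, hI2⟩ (oneElt K hpI)).symm.trans (congrArg Subtype.val h2')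
        exact one_ne_zero h01
      refine ⟨?_, ?_, ?_⟩
      · intro h0
        exact main (by rw [show f.app p (oneElt K hpI) = 0 by rw [h0]; rfl]; exact map_zero _)
      · intro h0
        exact main (by rw [h0]; rfl)
      · by_contra hJ
        exact main (by rw [charElt_eq_zero K hJ (f.app p (oneElt K hpI))]; exact map_zero _)
    obtain ⟨p₀, hp₀I, hp₀I2⟩ := htriv
    refine ⟨⟨f, fun h0 => (claim p₀ hp₀I hp₀I2).1
        ((congrArg (fun φ => φ.app p₀) h0).trans rfl)⟩,
      ⟨g, fun h0 => (claim p₀ hp₀I hp₀I2).2.1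
        ((congrArg (fun φ => φ.app (Φ.Ω ε p₀)) h0).trans rfl)⟩,
      ⟨⟨p₀, hp₀I, hp₀I2⟩, fun p hp => (claim p hp.1 hp.2).2.2⟩⟩
  · rintro (htriv | ⟨⟨f, hf⟩, ⟨g, hg⟩, hQne, hQsub⟩)
    · rw [isTrivialIv_iff] at htriv
      refine ⟨0, 0, fun p => ?_⟩
      have hc : ¬(p ∈ I ∧ Φ.Ω ε (Φ.Ω ε p) ∈ I) := fun h =>
        htriv p ⟨h.1, by rw [e2 p]; exact h.2⟩
      have hR : (charMod K I (hFiv I hIF).1).map (homOfLE (Φ.self_le_twice hε p))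
          = ModuleCat.ofHom (charMap K I p (Φ.Ω ε (Φ.Ω ε p))) := rfl
      rw [hR, charMap_zero K hc]
      simp
      rfl
    · have hJsh : Φ.shiftSet J ε ∈ F := by
        rw [shiftSet_eq_image]; exact hFflow J hJF (-ε)
      have hIsh : Φ.shiftSet I ε ∈ F := by
        rw [shiftSet_eq_image]; exact hFflow I hIF (-ε)
      have hW1 : PosetConnected (I ∩ Φ.shiftSet J ε) :=
        (hFiv _ (hFcap I hIF _ hJsh)).2
      have hW2 : PosetConnected (J ∩ Φ.shiftSet I ε) :=
        (hFiv _ (hFcap J hJF _ hIsh)).2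
      have hv1 := (valid_of_hom_ne_zero K (hFiv I hIF).1
        (Φ.posetConvex_shiftSet (hFiv J hJF).1 ε) hW1 f hf).2
      have hv2 := (valid_of_hom_ne_zero K (hFiv J hJF).1
        (Φ.posetConvex_shiftSet (hFiv I hIF).1 ε) hW2 g hg).2
      refine ⟨indTrans K (hFiv I hIF).1 (Φ.posetConvex_shiftSet (hFiv J hJF).1 ε) hv1,
        indTrans K (hFiv J hJF).1 (Φ.posetConvex_shiftSet (hFiv I hIF).1 ε) hv2,
        fun p => ?_⟩
      apply ModuleCat.hom_ext
      show (xMap K J (Φ.shiftSet I ε) (Φ.Ω ε p) (Φ.Ω ε p)).comp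
          (xMap K I (Φ.shiftSet J ε) p p) = charMap K I p (Φ.Ω ε (Φ.Ω ε p))
      refine lmap_ext K fun x => ?_
      show ((xMap K J (Φ.shiftSet I ε) (Φ.Ω ε p) (Φ.Ω ε p) (xMap K I (Φ.shiftSet J ε) p p x) : _) : K) = _
      obtain ⟨y, hy⟩ : ∃ y : ↥(charSub K J (Φ.Ω ε p)), y = xMap K I (Φ.shiftSet J ε) p p x := ⟨_, rfl⟩
      rw [← hy]
      by_cases hpI : p ∈ I
      · by_cases h2 : Φ.Ω ε (Φ.Ω ε p) ∈ I
        · have hpQ : p ∈ I ∩ Φ.shiftSet I (2 * ε) :=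
            ⟨hpI, show Φ.Ω (2 * ε) p ∈ I by rw [e2 p]; exact h2⟩
          have hpJ : Φ.Ω ε p ∈ J := hQsub hpQ
          rw [xMap_val K (A := J) (B := Φ.shiftSet I ε) (p := Φ.Ω ε p) (q := Φ.Ω ε p)
              ⟨hpJ, h2⟩,
            ]
          subst hy
          exact (xMap_val K (A := I) (B := Φ.shiftSet J ε) (p := p) (q := p) ⟨hpI, hpJ⟩
            x).trans (charMap_val K ⟨hpI, h2⟩ x).symm
        · rw [charMap_zero K (fun h' => h2 h'.2),
            xMap_zero K (A := J) (B := Φ.shiftSet I ε) (p := Φ.Ω ε p) (q := Φ.Ω ε p)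
              (fun h' => h2 h'.2)]
          rfl
      · obtain rfl : y = 0 := Subtype.ext (by
          rw [hy, xMap_zero K (A := I) (B := Φ.shiftSet J ε) (p := p) (q := p) (fun h' => hpI h'.1)]; rfl)
        rw [charElt_eq_zero K hpI x]
        simp
        exact (congrArg Subtype.val (map_zero (charMap K I p (Φ.Ω ε (Φ.Ω ε p))))).symm
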